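/- arXiv:2008.03292 — 2 statements merged into one kernel-verified Lean document; each statement's English description precedes it below -/
import Mathlib

section
/- For every permutation w ∈ S_n, the number of fixed points of w equals the number of records of u = F(w) that are either immediately followed by another record or occupy the final position (equivalently, records that are also ascents or the final position), where F is the Rényi–Foata map. -/
/-- The cycle of `w` containing `x`, listed starting at `x`:
`[x, w x, w² x, …]` with each element appearing once. -/
def cyc {n : ℕ} (w : Equiv.Perm (Fin n)) (x : Fin n) : List (Fin n) :=
  (List.range n).foldl (fun acc k => if (w ^ k) x ∈ acc then acc else acc ++ [(w ^ k) x]) []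

/-- The Rényi–Foata word of `w`: write the canonical cycle decomposition
(each cycle starting with its largest element, cycles listed in increasing
order of largest elements) and drop the parentheses. -/
def foataWord {n : ℕ} (w : Equiv.Perm (Fin n)) : List (Fin n) :=
  ((List.finRange n).filter (fun x => decide (∀ y ∈ cyc w x, y ≤ x))).flatMap (cyc w)

/-- The Rényi–Foata map, as a function `Fin n → Fin n` reading off the word. -/
def foataFun {n : ℕ} (w : Equiv.Perm (Fin n)) : Fin n → Fin n :=
  fun i => (foataWord w).getD i.val ⟨0, i.pos⟩

/-- One-line notation of a permutation, as a list of values in `Fin n`. -/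
def oneLineF {n : ℕ} (w : Equiv.Perm (Fin n)) : List (Fin n) :=
  (List.finRange n).map w

/-- One-line notation with natural-number entries (0-indexed values). -/
def oneLineN {n : ℕ} (w : Equiv.Perm (Fin n)) : List ℕ :=
  (List.finRange n).map fun i => (w i : ℕ)

/-- The Rényi–Foata word with natural-number entries. -/
def wordN {n : ℕ} (w : Equiv.Perm (Fin n)) : List ℕ :=
  (foataWord w).map Fin.val

/-- `i` is a record (left-to-right maximum) position of the word `L`. -/
def recB (L : List ℕ) (i : ℕ) : Bool :=
  decide (i < L.length ∧ ∀ j < i, L.getD j 0 < L.getD i 0)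

/-- Number of records (left-to-right maxima) of the word `L`. -/
def recordCount (L : List ℕ) : ℕ :=
  ((List.range L.length).filter (recB L)).length

/-- Number of fixed points (1-cycles) of `w`. -/
def fixCount {n : ℕ} (w : Equiv.Perm (Fin n)) : ℕ :=
  (Finset.univ.filter fun i : Fin n => w i = i).card

/-- `Rasc L` counts the records of `L` that are immediately followed by a
larger entry (equivalently, by another record) or occupy the final position. -/
def rascCount (L : List ℕ) : ℕ :=
  ((List.range L.length).filter fun i =>
    recB L i && (decide (i + 1 = L.length) || decide (L.getD i 0 < L.getD (i + 1) 0))).length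


/-! ### Auxiliary development -/

section Aux

variable {α : Type*} [DecidableEq α]

/-- dedup-insert fold step -/
def insF (acc : List α) (a : α) : List α := if a ∈ acc then acc else acc ++ [a]

lemma mem_insF (acc : List α) (a y : α) : y ∈ insF acc a ↔ y ∈ acc ∨ y = a := by
  unfold insF; split
  · rename_i h
    constructor
    · exact Or.inl
    · rintro (hy | rfl)
      · exact hy
      · exact h
  · simp

lemma prefix_foldl_insF (l : List α) (acc : List α) : acc <+: l.foldl insF acc := by
  induction l generalizing acc with
  | nil => exact List.prefix_refl _
  | cons a l ih =>
    refine List.IsPrefix.trans ?_ (ih (insF acc a))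
    unfold insF; split
    · exact List.prefix_refl _
    · exact ⟨[a], rfl⟩

lemma mem_foldl_insF (l : List α) (acc : List α) (y : α) :
    y ∈ l.foldl insF acc ↔ y ∈ acc ∨ y ∈ l := by
  induction l generalizing acc with
  | nil => simp
  | cons a l ih =>
    simp only [List.foldl_cons, ih, mem_insF, List.mem_cons]
    tauto

lemma nodup_foldl_insF (l : List α) (acc : List α) (h : acc.Nodup) :
    (l.foldl insF acc).Nodup := by
  induction l generalizing acc with
  | nil => exact h
  | cons a l ih =>
    apply ih
    unfold insF; split
    · exact h
    · rename_i ha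
      simpa [List.nodup_append] using ⟨h, fun b hb hba => ha (hba ▸ hb)⟩

end Aux

section Cyc

variable {n : ℕ} (w : Equiv.Perm (Fin n))

lemma cyc_eq_foldl (x : Fin n) :
    cyc w x = ((List.range n).map fun k => (w ^ k) x).foldl insF [] := by
  rw [List.foldl_map]; rfl

lemma mem_cyc (x y : Fin n) : y ∈ cyc w x ↔ ∃ k < n, (w ^ k) x = y := by
  rw [cyc_eq_foldl, mem_foldl_insF]
  simp

lemma nodup_cyc (x : Fin n) : (cyc w x).Nodup := by
  rw [cyc_eq_foldl]; exact nodup_foldl_insF _ _ List.nodup_nil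

lemma cyc_eq_cons (x : Fin n) : ∃ t, cyc w x = x :: t := by
  obtain ⟨m, rfl⟩ : ∃ m, n = m + 1 := ⟨n - 1, by have := x.pos; omega⟩
  rw [cyc_eq_foldl, List.range_succ_eq_map, List.map_cons, List.foldl_cons]
  have h0 : insF ([] : List (Fin (m+1))) ((w ^ 0) x) = [x] := by
    simp [insF]
  rw [h0]
  obtain ⟨t, ht⟩ :=
    prefix_foldl_insF ((List.map Nat.succ (List.range m)).map fun k => (w ^ k) x) [x]
  exact ⟨t, ht.symm⟩

lemma cyc_fix (x : Fin n) (h : w x = x) : cyc w x = [x] := by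
  have hmem : ∀ y ∈ cyc w x, y = x := by
    intro y hy
    rw [mem_cyc] at hy
    obtain ⟨k, -, rfl⟩ := hy
    induction k with
    | zero => simp
    | succ k ih => rw [pow_succ, Equiv.Perm.mul_apply, h, ih]
  obtain ⟨t, ht⟩ := cyc_eq_cons w x
  have hn := nodup_cyc w x
  rw [ht] at hn ⊢
  cases t with
  | nil => rfl
  | cons y t =>
    exfalso
    have : y = x := hmem y (by rw [ht]; simp)
    simp [this] at hn

lemma fix_of_cyc_len (x : Fin n) (h : (cyc w x).length = 1) : w x = x := by
  rcases Nat.lt_or_ge 1 n with hn | hn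
  · obtain ⟨t, ht⟩ := cyc_eq_cons w x
    rw [ht] at h
    simp at h
    have : w x ∈ cyc w x := by
      rw [mem_cyc]; exact ⟨1, hn, by simp⟩
    rw [ht, h] at this
    simpa using this
  · have : n = 1 := by have := x.pos; omega
    subst this
    exact Subsingleton.elim _ _

lemma cyc_len_one_iff (x : Fin n) : ((cyc w x).length = 1) ↔ w x = x := by
  constructor
  · exact fix_of_cyc_len w x
  · intro h; rw [cyc_fix w x h]; rfl

end Cyc

/-! ### rasc recursion -/

def rascAux (m : ℕ) : List ℕ → ℕ
  | [] => 0
  | [a] => if m ≤ a then 1 else 0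
  | a :: b :: L => (if m ≤ a ∧ a < b then 1 else 0) + rascAux (max m (a + 1)) (b :: L)

lemma rascAux_cons₂ (m a b : ℕ) (L : List ℕ) :
    rascAux m (a :: b :: L) =
      (if m ≤ a ∧ a < b then 1 else 0) + rascAux (max m (a + 1)) (b :: L) := rfl

lemma rascAux_drop (t : List ℕ) (rest : List ℕ) (c : ℕ) (h : ∀ y ∈ t, y < c) :
    rascAux c (t ++ rest) = rascAux c rest := by
  induction t with
  | nil => rfl
  | cons y t ih =>
    have hy : y < c := h y (by simp)
    have hmax : max c (y + 1) = c := Nat.max_eq_left (by omega)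
    rw [List.cons_append]
    cases hrw : t ++ rest with
    | nil =>
      obtain ⟨rfl, rfl⟩ := List.append_eq_nil_iff.mp hrw
      simp [rascAux, Nat.not_le.mpr hy]
    | cons z s =>
      have h1 : ¬ (c ≤ y ∧ y < z) := by omega
      rw [rascAux_cons₂, hmax, ← hrw, ih (fun y hy => h y (by simp [hy]))]
      simp [h1]

/-- blocks structure: each block nonempty, head ≥ m is strict max of block,
heads strictly increasing. -/
def goodBlocks : ℕ → List (List ℕ) → Prop
  | _, [] => True
  | m, B :: bs => ∃ a t, B = a :: t ∧ m ≤ a ∧ (∀ y ∈ t, y < a) ∧ goodBlocks (a + 1) bs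

lemma rascAux_goodBlocks : ∀ (bs : List (List ℕ)) (m : ℕ), goodBlocks m bs →
    rascAux m bs.flatten = bs.countP (fun B => B.length == 1) := by
  intro bs
  induction bs with
  | nil => intro m _; rfl
  | cons B bs ih =>
    intro m hg
    obtain ⟨a, t, rfl, hma, ht, hgood⟩ := hg
    rw [List.flatten_cons, List.cons_append]
    have hmax : max m (a + 1) = a + 1 := Nat.max_eq_right (by omega)
    have hdrop : rascAux (a + 1) (t ++ bs.flatten) = rascAux (a + 1) bs.flatten :=
      rascAux_drop t _ _ (fun y hy => by have := ht y hy; omega)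
    cases hrw : t ++ bs.flatten with
    | nil =>
      obtain ⟨rfl, hfl⟩ := List.append_eq_nil_iff.mp hrw
      have hbs : bs = [] := by
        cases bs with
        | nil => rfl
        | cons B' bs' =>
          obtain ⟨a', t', rfl, -, -, -⟩ := hgood
          simp at hfl
      subst hbs
      simp [rascAux, hma, List.countP_cons]
    | cons z s =>
      rw [hrw] at hdrop
      rw [rascAux_cons₂, hmax, hdrop, ih _ hgood, List.countP_cons]
      rw [Nat.add_comm]
      congr 1
      cases t with
      | cons y t' =>
        have hy : y < a := ht y (by simp)
        have hz : z = y := by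
          simpa using congrArg (fun l => l.headD 0) hrw.symm
        subst hz
        have h1 : ¬ (m ≤ a ∧ a < z) := by omega
        simp [h1]
      | nil =>
        cases bs with
        | nil => simp at hrw
        | cons B' bs' =>
          obtain ⟨a', t', rfl, ha', -, -⟩ := hgood
          have hz : z = a' := by
            simpa using congrArg (fun l => l.headD 0) hrw.symm
          have hc : m ≤ a ∧ a < z := ⟨hma, by omega⟩
          simp [hc]

/-! ### record positions with threshold -/

def recBm (m : ℕ) (L : List ℕ) (i : ℕ) : Bool :=
  decide (i < L.length ∧ m ≤ L.getD i 0 ∧ ∀ j < i, L.getD j 0 < L.getD i 0)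

def rascM (m : ℕ) (L : List ℕ) : ℕ :=
  (List.range L.length).countP fun i =>
    recBm m L i && (decide (i + 1 = L.length) || decide (L.getD i 0 < L.getD (i + 1) 0))

lemma recBm_cons (m a : ℕ) (L : List ℕ) (i : ℕ) :
    recBm m (a :: L) (i + 1) = recBm (max m (a + 1)) L i := by
  simp only [recBm, decide_eq_decide]
  constructor
  · rintro ⟨h1, h2, h3⟩
    refine ⟨by simpa using h1, ?_, ?_⟩
    · have h0 := h3 0 (by omega)
      simp only [List.getD_cons_zero, List.getD_cons_succ] at h0 h2
      omega
    · intro j hj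
      have := h3 (j + 1) (by omega)
      simpa using this
  · rintro ⟨h1, h2, h3⟩
    refine ⟨by simpa using h1, ?_, ?_⟩
    · simp only [List.getD_cons_succ]; omega
    · intro j hj
      cases j with
      | zero =>
        simp only [List.getD_cons_zero, List.getD_cons_succ]
        omega
      | succ j =>
        simp only [List.getD_cons_succ]
        exact h3 j (by omega)

lemma rascM_eq_rascAux : ∀ (L : List ℕ) (m : ℕ), rascM m L = rascAux m L := by
  intro L
  induction L with
  | nil => intro m; rfl
  | cons a L ih =>
    intro m
    rw [rascM]
    simp only [List.length_cons, List.range_succ_eq_map, List.countP_cons, List.countP_map]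
    have htail : List.countP ((fun i =>
        recBm m (a :: L) i &&
          (decide (i + 1 = L.length + 1) ||
            decide ((a :: L).getD i 0 < (a :: L).getD (i + 1) 0))) ∘ Nat.succ)
        (List.range L.length) = rascAux (max m (a + 1)) L := by
      rw [← ih (max m (a + 1)), rascM]
      apply List.countP_congr
      intro i _
      simp only [Function.comp_apply, Nat.succ_eq_add_one, recBm_cons, List.getD_cons_succ,
        Bool.and_eq_true, Bool.or_eq_true, decide_eq_true_eq]
      constructor <;> rintro ⟨h1, h2⟩ <;> exact ⟨h1, by omega⟩
    rw [htail]
    cases L with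
    | nil =>
      by_cases hma : m ≤ a <;>
        simp [rascAux, recBm, hma]
    | cons b L' =>
      rw [rascAux_cons₂, Nat.add_comm]
      congr 1
      have hiff : ((recBm m (a :: b :: L') 0 &&
          (decide (0 + 1 = (b :: L').length + 1) ||
            decide ((a :: b :: L').getD 0 0 < (a :: b :: L').getD (0 + 1) 0))) = true) ↔
          (m ≤ a ∧ a < b) := by
        simp only [Bool.and_eq_true, Bool.or_eq_true, decide_eq_true_eq, recBm,
          List.length_cons, List.getD_cons_zero, List.getD_cons_succ]
        constructor
        · rintro ⟨⟨-, h2, -⟩, h3 | h4⟩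
          · omega
          · exact ⟨h2, h4⟩
        · rintro ⟨h1, h2⟩
          exact ⟨⟨by omega, h1, fun j hj => absurd hj (Nat.not_lt_zero j)⟩, Or.inr h2⟩
      rw [if_congr hiff rfl rfl]

lemma rascCount_eq_rascM (L : List ℕ) : rascCount L = rascM 0 L := by
  rw [rascCount, rascM, List.countP_eq_length_filter]
  congr 1
  apply List.filter_congr
  intro i _
  congr 1
  simp [recB, recBm, decide_eq_decide]

/-! ### putting it together -/

section Main

variable {n : ℕ} (w : Equiv.Perm (Fin n))

lemma goodBlocks_of_maxes : ∀ (M : List (Fin n)), M.Pairwise (· < ·) →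
    (∀ x ∈ M, ∀ y ∈ cyc w x, y ≤ x) → ∀ m : ℕ, (∀ x ∈ M, m ≤ x.val) →
    goodBlocks m (M.map fun x => (cyc w x).map Fin.val) := by
  intro M
  induction M with
  | nil => intro _ _ m _; trivial
  | cons x M ih =>
    intro hpw hmax m hm
    obtain ⟨t, ht⟩ := cyc_eq_cons w x
    refine ⟨x.val, t.map Fin.val, by simp [ht], hm x (by simp), ?_, ?_⟩
    · intro y hy
      obtain ⟨z, hz, rfl⟩ := List.mem_map.mp hy
      have hzc : z ∈ cyc w x := by rw [ht]; exact List.mem_cons_of_mem _ hz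
      have hle : z ≤ x := hmax x (by simp) z hzc
      have hne : z ≠ x := by
        intro h
        have hnd := nodup_cyc w x
        rw [ht] at hnd
        exact (List.nodup_cons.mp hnd).1 (h ▸ hz)
      have hzx : z < x := lt_of_le_of_ne hle hne
      exact hzx
    · apply ih (List.Pairwise.of_cons hpw)
        (fun z hz => hmax z (List.mem_cons_of_mem _ hz))
      intro z hz
      exact (List.pairwise_cons.mp hpw).1 z hz

lemma fixCount_eq_countP : fixCount w = (List.finRange n).countP (fun i => decide (w i = i)) := by
  rw [fixCount, Fin.univ_def, List.countP_eq_length_filter]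
  rfl

end Main

/-- For every permutation `w ∈ S_n`, the number of fixed
points of `w` equals the number of records of `u = F(w)` that are either
immediately followed by another record (i.e. a larger entry) or occupy the
final position, where `F` is the Rényi–Foata map. -/
theorem fix_eq_rasc_foata (n : ℕ) (w : Equiv.Perm (Fin n)) :
    fixCount w = rascCount (wordN w) := by
  classical
  set M : List (Fin n) := (List.finRange n).filter (fun x => decide (∀ y ∈ cyc w x, y ≤ x)) with hM
  have hword : wordN w = (M.map fun x => (cyc w x).map Fin.val).flatten := by
    rw [wordN, foataWord, List.map_flatMap, List.flatMap_def]
  have hpw : M.Pairwise (· < ·) := List.Pairwise.filter _ (List.pairwise_lt_finRange n)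
  have hmax : ∀ x ∈ M, ∀ y ∈ cyc w x, y ≤ x := by
    intro x hx
    rw [hM, List.mem_filter] at hx
    exact of_decide_eq_true hx.2
  have hgood : goodBlocks 0 (M.map fun x => (cyc w x).map Fin.val) :=
    goodBlocks_of_maxes w M hpw hmax 0 (fun x _ => Nat.zero_le _)
  rw [rascCount_eq_rascM, rascM_eq_rascAux, hword, rascAux_goodBlocks _ _ hgood]
  rw [List.countP_map]
  have hcnt : M.countP ((fun B => B.length == 1) ∘ fun x => (cyc w x).map Fin.val) =
      M.countP (fun x => decide (w x = x)) := by
    apply List.countP_congr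
    intro x _
    simp only [Function.comp, List.length_map, beq_iff_eq, decide_eq_true_eq]
    exact ⟨fun h => (cyc_len_one_iff w x).mp h,
      fun h => by simp [cyc_fix w x h]⟩
  rw [hcnt, hM, List.countP_filter, fixCount_eq_countP]
  symm
  apply List.countP_congr
  intro x _
  constructor
  · intro h
    rw [Bool.and_eq_true] at h
    exact h.1
  · intro h
    have hfix : w x = x := of_decide_eq_true h
    rw [Bool.and_eq_true]
    refine ⟨h, decide_eq_true ?_⟩
    rw [cyc_fix w x hfix]
    simp
end

section
/- The statistic Fix (number of fixed points) is 1-mesic for the action of φ̄ = I ∘ F^{-1} ∘ R ∘ F on S_n: the average of Fix over every φ̄-orbit equals 1. -/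
/-- `IsPhi w w'` says that `w' = φ(w)` where `φ = F ∘ I ∘ F⁻¹ ∘ R`:
first reverse the one-line notation of `w`, then apply `F⁻¹` (giving the
unique `u` whose Foata word is that reversal), invert `u`, and apply `F`. -/
def IsPhi {n : ℕ} (w w' : Equiv.Perm (Fin n)) : Prop :=
  ∃ u : Equiv.Perm (Fin n),
    foataWord u = (oneLineF w).reverse ∧ oneLineF w' = foataWord u⁻¹

/-- `IsPhiBar w w'` says that `w' = φ̄(w)` where `φ̄ = I ∘ F⁻¹ ∘ R ∘ F`:
apply `F` to `w`, reverse the resulting word, apply `F⁻¹`, and invert. -/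
def IsPhiBar {n : ℕ} (w w' : Equiv.Perm (Fin n)) : Prop :=
  foataWord w'⁻¹ = (foataWord w).reverse

/-- `IsGamma w w'` says that `w' = γ(w)` where `γ = I ∘ F⁻¹ ∘ C ∘ F`:
apply `F` to `w`, complement each entry of the resulting word, apply `F⁻¹`,
and invert. -/
def IsGamma {n : ℕ} (w w' : Equiv.Perm (Fin n)) : Prop :=
  foataWord w'⁻¹ = (foataWord w).map Fin.rev



open List

section ListPart
variable {α : Type*} [LinearOrder α]

lemma foldl_max_mem : ∀ (l : List α) (a : α), l.foldl max a ∈ a :: l := by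
  intro l
  induction l with
  | nil => intro a; simp
  | cons b t ih =>
    intro a
    have := ih (max a b)
    simp only [foldl_cons]
    rcases mem_cons.1 this with h | h
    · rw [h]; rcases max_choice a b with h' | h' <;> simp [h']
    · simp [h]

lemma le_foldl_max : ∀ (l : List α) (a : α), ∀ x ∈ a :: l, x ≤ l.foldl max a := by
  intro l
  induction l with
  | nil => intro a x hx; simp at hx; simp [hx]
  | cons b t ih =>
    intro a x hx
    simp only [foldl_cons]
    have hbase : max a b ≤ foldl max (max a b) t := ih (max a b) _ mem_cons_self
    rcases mem_cons.1 hx with h | h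
    · exact le_trans (h.le.trans (le_max_left a b)) hbase
    · rcases mem_cons.1 h with h' | h'
      · exact le_trans (h'.le.trans (le_max_right a b)) hbase
      · exact ih (max a b) x (mem_cons_of_mem _ h')

omit [LinearOrder α] in
lemma length_takeWhile_ne_lt [DecidableEq α] :
    ∀ {L : List α} {m : α}, m ∈ L → (L.takeWhile (· ≠ m)).length < L.length := by
  intro L
  induction L with
  | nil => intro m h; simp at h
  | cons a t ih =>
    intro m h
    by_cases ha : a = m
    · subst ha
      simp [takeWhile_cons]
    · rcases mem_cons.1 h with h' | h'
      · exact absurd h'.symm ha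
      · have : (a ≠ m : Prop) := ha
        simp only [takeWhile_cons, decide_eq_true_eq, if_pos this, length_cons]
        simpa using ih h'

/-- The word map `T`: cut after the maximum, `T (P ++ [M] ++ Q) = T Q ++ [M] ++ P`. -/
def Tl : List α → List α
  | [] => []
  | a :: l =>
    Tl (((a :: l).dropWhile (· ≠ l.foldl max a)).tail)
      ++ l.foldl max a :: (a :: l).takeWhile (· ≠ l.foldl max a)
termination_by L => L.length
decreasing_by
  simp only [length_tail]
  have h1 : ((a :: l).dropWhile (· ≠ l.foldl max a)).length ≤ (a :: l).length :=
    (dropWhile_sublist _).length_le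
  simp only [length_cons] at h1 ⊢
  omega

/-- The statistic `B`: number of singleton record blocks. -/
def Bl : List α → ℕ
  | [] => 0
  | a :: l =>
    Bl ((a :: l).takeWhile (· ≠ l.foldl max a))
      + (if ((a :: l).dropWhile (· ≠ l.foldl max a)).tail = [] then 1 else 0)
termination_by L => L.length
decreasing_by
  exact length_takeWhile_ne_lt (foldl_max_mem l a)

lemma Tl_nil : (Tl ([] : List α)) = [] := by simp [Tl]
lemma Bl_nil : (Bl ([] : List α)) = 0 := by simp [Bl]

variable {P Q : List α} {M : α}

lemma foldl_max_of_max (hP : ∀ x ∈ P, x < M) (hQ : ∀ x ∈ Q, x < M) :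
    ∀ a l, a :: l = P ++ M :: Q → l.foldl max a = M := by
  intro a l h
  have hmem : l.foldl max a ∈ a :: l := foldl_max_mem l a
  have hub : ∀ x ∈ a :: l, x ≤ l.foldl max a := le_foldl_max l a
  have h1 : l.foldl max a ≤ M := by
    rw [h] at hmem
    rcases mem_append.1 hmem with h' | h'
    · exact le_of_lt (hP _ h')
    · rcases mem_cons.1 h' with h'' | h''
      · exact h''.le
      · exact le_of_lt (hQ _ h'')
  have h2 : M ≤ l.foldl max a := hub M (by rw [h]; exact mem_append.2 (Or.inr mem_cons_self))
  exact le_antisymm h1 h2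

lemma takeWhile_ne_max (hP : ∀ x ∈ P, x < M) :
    (P ++ M :: Q).takeWhile (· ≠ M) = P := by
  induction P with
  | nil => simp [takeWhile_cons]
  | cons a t ih =>
    have ha : a ≠ M := ne_of_lt (hP a mem_cons_self)
    simp only [cons_append, takeWhile_cons, decide_eq_true_eq, if_pos ha]
    rw [ih (fun x hx => hP x (mem_cons_of_mem _ hx))]

lemma dropWhile_ne_max (hP : ∀ x ∈ P, x < M) :
    (P ++ M :: Q).dropWhile (· ≠ M) = M :: Q := by
  induction P with
  | nil => simp [dropWhile_cons]
  | cons a t ih =>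
    have ha : a ≠ M := ne_of_lt (hP a mem_cons_self)
    simp only [cons_append, dropWhile_cons, decide_eq_true_eq, if_pos ha]
    exact ih (fun x hx => hP x (mem_cons_of_mem _ hx))

lemma Tl_split (hP : ∀ x ∈ P, x < M) (hQ : ∀ x ∈ Q, x < M) :
    Tl (P ++ M :: Q) = Tl Q ++ M :: P := by
  obtain ⟨a, l, hal⟩ : ∃ a l, P ++ M :: Q = a :: l := by
    cases P with
    | nil => exact ⟨M, Q, rfl⟩
    | cons a t => exact ⟨a, t ++ M :: Q, rfl⟩
  rw [hal, Tl]
  rw [foldl_max_of_max hP hQ a l hal.symm, ← hal, dropWhile_ne_max hP, takeWhile_ne_max hP]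
  simp

lemma Bl_split (hP : ∀ x ∈ P, x < M) (hQ : ∀ x ∈ Q, x < M) :
    Bl (P ++ M :: Q) = Bl P + (if Q = [] then 1 else 0) := by
  obtain ⟨a, l, hal⟩ : ∃ a l, P ++ M :: Q = a :: l := by
    cases P with
    | nil => exact ⟨M, Q, rfl⟩
    | cons a t => exact ⟨a, t ++ M :: Q, rfl⟩
  rw [hal, Bl]
  rw [foldl_max_of_max hP hQ a l hal.symm, ← hal, dropWhile_ne_max hP, takeWhile_ne_max hP]
  simp
  congr

end ListPart

section ListPart2
open Function
variable {α : Type*} [LinearOrder α]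

omit [LinearOrder α] in
lemma dropWhile_ne_eq_cons [DecidableEq α] {L : List α} {m : α} (hm : m ∈ L) :
    L.dropWhile (· ≠ m) = m :: (L.dropWhile (· ≠ m)).tail := by
  have hne' : L.dropWhile (· ≠ m) ≠ [] := by
    intro h
    have h2 := takeWhile_append_dropWhile (p := (· ≠ m)) (l := L)
    rw [h, append_nil] at h2
    have hmem2 : m ∈ L.takeWhile (· ≠ m) := by rw [h2]; exact hm
    have := mem_takeWhile_imp (p := fun x => decide (x ≠ m)) hmem2
    simp at this
  have hb := head_dropWhile_not (· ≠ m) hne'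
  have hbm : (L.dropWhile (· ≠ m)).head hne' = m := by simpa using hb
  have hct := List.cons_head_tail hne'
  rw [hbm] at hct
  exact hct.symm

lemma exists_max_split {L : List α} (hne : L ≠ []) (hnd : L.Nodup) :
    ∃ P M Q, L = P ++ M :: Q ∧ (∀ x ∈ P, x < M) ∧ (∀ x ∈ Q, x < M) := by
  obtain ⟨a, l, rfl⟩ := exists_cons_of_ne_nil hne
  set m := l.foldl max a with hm
  have hmem : m ∈ a :: l := foldl_max_mem l a
  have hub : ∀ x ∈ a :: l, x ≤ m := le_foldl_max l a
  have hdw := dropWhile_ne_eq_cons hmem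
  refine ⟨(a :: l).takeWhile (· ≠ m), m, ((a :: l).dropWhile (· ≠ m)).tail, ?_, ?_, ?_⟩
  · conv_lhs => rw [← takeWhile_append_dropWhile (p := (· ≠ m)) (l := a :: l)]
    rw [← hdw]
  · intro x hx
    have hxm : x ≠ m := by
      have := mem_takeWhile_imp (p := fun x => decide (x ≠ m)) hx
      simpa using this
    exact lt_of_le_of_ne (hub x ((takeWhile_sublist _).mem hx)) hxm
  · intro x hx
    have hx' : x ∈ (a :: l).dropWhile (· ≠ m) := mem_of_mem_tail hx
    have hle : x ≤ m := hub x ((dropWhile_sublist _).mem hx')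
    have hdnd : ((a :: l).dropWhile (· ≠ m)).Nodup := (dropWhile_sublist _).nodup hnd
    rw [hdw] at hdnd
    have hmn : m ∉ ((a :: l).dropWhile (· ≠ m)).tail := (nodup_cons.1 hdnd).1
    exact lt_of_le_of_ne hle (fun h => hmn (h ▸ hx))

lemma Tl_perm (L : List α) : Tl L ~ L := by
  suffices h : ∀ len (L : List α), L.length ≤ len → Tl L ~ L from h L.length L le_rfl
  intro len
  induction len with
  | zero =>
    intro L hL
    rw [length_eq_zero_iff.1 (Nat.le_zero.1 hL)]
    simp [Tl_nil]
  | succ len ih =>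
    intro L hL
    rcases eq_or_ne L [] with rfl | hne
    · simp [Tl_nil]
    obtain ⟨a, l, rfl⟩ := exists_cons_of_ne_nil hne
    rw [Tl]
    set m := l.foldl max a with hm
    set P := (a :: l).takeWhile (· ≠ m) with hP
    set Q := ((a :: l).dropWhile (· ≠ m)).tail with hQ
    have hmem : m ∈ a :: l := foldl_max_mem l a
    have hQlen : Q.length < (a :: l).length := by
      have h1 : ((a :: l).dropWhile (· ≠ m)).length ≤ (a :: l).length :=
        (dropWhile_sublist _).length_le
      simp only [hQ, length_tail]
      simp only [length_cons] at h1 ⊢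
      omega
    have hTQ : Tl Q ~ Q := ih Q (by simp only [length_cons] at hQlen hL ⊢; omega)
    have hsplit : P ++ m :: Q = a :: l := by
      conv_rhs => rw [← takeWhile_append_dropWhile (p := (· ≠ m)) (l := a :: l), dropWhile_ne_eq_cons hmem]
    calc Tl Q ++ m :: P ~ Q ++ m :: P := hTQ.append_right _
      _ ~ P ++ m :: Q :=
          perm_middle.trans ((Perm.cons m perm_append_comm).trans perm_middle.symm)
      _ = a :: l := hsplit

lemma Tl_iterate_perm (k : ℕ) (L : List α) : Tl^[k] L ~ L := by
  induction k with
  | zero => simp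
  | succ k ih => rw [Function.iterate_succ_apply']; exact (Tl_perm _).trans ih

lemma Tl_iterate_nil (k : ℕ) : Tl^[k] ([] : List α) = [] := by
  induction k with
  | zero => rfl
  | succ k ih => rw [Function.iterate_succ_apply', ih, Tl_nil]

lemma Tl_iterate_eq_nil_iff {k : ℕ} {L : List α} : Tl^[k] L = [] ↔ L = [] := by
  constructor
  · intro h
    have := Tl_iterate_perm k L
    rw [h] at this
    exact this.symm.eq_nil
  · rintro rfl; exact Tl_iterate_nil k

lemma Tl_iter_two_mul {P Q : List α} {M : α} (hP : ∀ x ∈ P, x < M) (hQ : ∀ x ∈ Q, x < M) :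
    ∀ s : ℕ, Tl^[2 * s] (P ++ M :: Q) = Tl^[s] P ++ M :: Tl^[s] Q := by
  intro s
  induction s with
  | zero => simp
  | succ s ih =>
    have hPs : ∀ x ∈ Tl^[s] P, x < M := fun x hx => hP x ((Tl_iterate_perm s P).mem_iff.1 hx)
    have hQs : ∀ x ∈ Tl^[s] Q, x < M := fun x hx => hQ x ((Tl_iterate_perm s Q).mem_iff.1 hx)
    have hQs1 : ∀ x ∈ Tl^[s+1] Q, x < M := fun x hx => hQ x ((Tl_iterate_perm (s+1) Q).mem_iff.1 hx)
    have h2 : 2 * (s + 1) = (2 * s) + 1 + 1 := by ring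
    rw [h2, Function.iterate_succ_apply', Function.iterate_succ_apply', ih,
      Tl_split hPs hQs, ← Function.iterate_succ_apply' Tl s Q,
      Tl_split hQs1 hPs, ← Function.iterate_succ_apply' Tl s P]

lemma Tl_iter_odd {P Q : List α} {M : α} (hP : ∀ x ∈ P, x < M) (hQ : ∀ x ∈ Q, x < M)
    (s : ℕ) : Tl^[2 * s + 1] (P ++ M :: Q) = Tl^[s + 1] Q ++ M :: Tl^[s] P := by
  have hPs : ∀ x ∈ Tl^[s] P, x < M := fun x hx => hP x ((Tl_iterate_perm s P).mem_iff.1 hx)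
  have hQs : ∀ x ∈ Tl^[s] Q, x < M := fun x hx => hQ x ((Tl_iterate_perm s Q).mem_iff.1 hx)
  rw [Function.iterate_succ_apply', Tl_iter_two_mul hP hQ, Tl_split hPs hQs,
    ← Function.iterate_succ_apply' Tl s Q]

lemma iterate_fixed_of_dvd {β : Type*} {f : β → β} {x : β} {m k : ℕ}
    (h : f^[m] x = x) (hdvd : m ∣ k) : f^[k] x = x := by
  obtain ⟨c, rfl⟩ := hdvd
  rw [Function.iterate_mul]
  induction c with
  | zero => rfl
  | succ c ih => rw [Function.iterate_succ_apply', ih, h]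

lemma Tl_periodic (L : List α) (hnd : L.Nodup) : Tl^[2 ^ L.length] L = L := by
  suffices h : ∀ len (L : List α), L.length ≤ len → L.Nodup → Tl^[2 ^ L.length] L = L from
    h L.length L le_rfl hnd
  clear hnd L
  intro len
  induction len with
  | zero =>
    intro L hL _
    rw [length_eq_zero_iff.1 (Nat.le_zero.1 hL)]
    exact Tl_iterate_nil _
  | succ len ih =>
    intro L hL hnd
    rcases eq_or_ne L [] with rfl | hne
    · exact Tl_iterate_nil _
    obtain ⟨P, M, Q, rfl, hP, hQ⟩ := exists_max_split hne hnd
    have hlen : (P ++ M :: Q).length = P.length + Q.length + 1 := by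
      simp only [length_append, length_cons]; omega
    have hPnd : P.Nodup := ((nodup_append.1 hnd).1)
    have hQnd : Q.Nodup := (nodup_cons.1 (nodup_append.1 hnd).2.1).2
    have h2 : 2 ^ (P ++ M :: Q).length = 2 * 2 ^ (P.length + Q.length) := by
      rw [hlen, pow_succ]; ring
    rw [h2, Tl_iter_two_mul hP hQ]
    have hlenP : P.length ≤ len := by rw [hlen] at hL; omega
    have hlenQ : Q.length ≤ len := by rw [hlen] at hL; omega
    have hPfix : Tl^[2 ^ (P.length + Q.length)] P = P :=
      iterate_fixed_of_dvd (ih P hlenP hPnd) (pow_dvd_pow 2 (by omega))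
    have hQfix : Tl^[2 ^ (P.length + Q.length)] Q = Q :=
      iterate_fixed_of_dvd (ih Q hlenQ hQnd) (pow_dvd_pow 2 (by omega))
    rw [hPfix, hQfix]

end ListPart2

section ListPart3
open Function Finset
variable {α : Type*} [LinearOrder α]

lemma sum_even_odd (F : ℕ → ℕ) (l : ℕ) :
    ∑ j ∈ Finset.range (2 * l), F j = ∑ k ∈ Finset.range l, (F (2 * k) + F (2 * k + 1)) := by
  induction l with
  | zero => simp
  | succ l ih =>
    have h : 2 * (l + 1) = (2 * l) + 1 + 1 := by ring
    rw [h, Finset.sum_range_succ, Finset.sum_range_succ, ih, Finset.sum_range_succ]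
    omega

lemma sum_iterate_period {β : Type*} {f : β → β} {x : β} (g : β → ℕ) {m : ℕ}
    (hx : f^[m] x = x) (c : ℕ) :
    ∑ k ∈ Finset.range (c * m), g (f^[k] x) = c * ∑ k ∈ Finset.range m, g (f^[k] x) := by
  induction c with
  | zero => simp
  | succ c ih =>
    have h : (c + 1) * m = c * m + m := by ring
    rw [h, Finset.sum_range_add, ih]
    have hcm : f^[c * m] x = x := iterate_fixed_of_dvd hx ⟨c, by ring⟩
    have : ∀ k, f^[c * m + k] x = f^[k] x := fun k => by
      rw [add_comm, Function.iterate_add_apply, hcm]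
    simp only [this]
    ring

lemma sum_iterate_shift {β : Type*} {f : β → β} {x : β} (g : β → ℕ) {m : ℕ}
    (hx : f^[m] x = x) :
    ∑ k ∈ Finset.range m, g (f^[k + 1] x) = ∑ k ∈ Finset.range m, g (f^[k] x) := by
  have h1 := Finset.sum_range_succ' (fun k => g (f^[k] x)) m
  have h2 := Finset.sum_range_succ (fun k => g (f^[k] x)) m
  simp only [Function.iterate_zero_apply] at h1
  rw [hx] at h2
  omega

end ListPart3

section ListPart4
open Function Finset List
variable {α : Type*} [LinearOrder α]

omit [LinearOrder α] in
lemma append_cons_inj_of_not_mem {P P' Q Q' : List α} {M : α}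
    (h : P ++ M :: Q = P' ++ M :: Q') (hMP : M ∉ P) (hMP' : M ∉ P') :
    P = P' ∧ Q = Q' := by
  induction P generalizing P' with
  | nil =>
    cases P' with
    | nil => simpa using h
    | cons a t =>
      simp only [nil_append, cons_append, cons.injEq] at h
      exact absurd (h.1 ▸ List.mem_cons_self (a := a) (l := t)) (h.1 ▸ hMP')
  | cons a t ih =>
    cases P' with
    | nil =>
      simp only [nil_append, cons_append, cons.injEq] at h
      exact absurd (h.1 ▸ List.mem_cons_self (a := a) (l := t)) (by rw [← h.1] at hMP; exact fun _ => hMP (List.mem_cons_self (a := a) (l := t)))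
    | cons a' t' =>
      simp only [cons_append, cons.injEq] at h
      obtain ⟨rfl, h2⟩ := h
      have := ih h2 (fun hm => hMP (mem_cons_of_mem _ hm)) (fun hm => hMP' (mem_cons_of_mem _ hm))
      exact ⟨by rw [this.1], this.2⟩

lemma minimalPeriod_Tl_pos (L : List α) (hnd : L.Nodup) : 0 < minimalPeriod Tl L :=
  IsPeriodicPt.minimalPeriod_pos (Nat.pow_pos (by norm_num)) (Tl_periodic L hnd)

lemma Tl_iterate_minimalPeriod (L : List α) (hnd : L.Nodup) :
    Tl^[minimalPeriod Tl L] L = L :=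
  iterate_minimalPeriod

theorem Bl_orbit_sum (L : List α) (hnd : L.Nodup) (hne : L ≠ []) :
    ∑ k ∈ Finset.range (minimalPeriod Tl L), Bl (Tl^[k] L) = minimalPeriod Tl L := by
  suffices h : ∀ len (L : List α), L.length ≤ len → L.Nodup → L ≠ [] →
      ∑ k ∈ Finset.range (minimalPeriod Tl L), Bl (Tl^[k] L) = minimalPeriod Tl L from
    h L.length L le_rfl hnd hne
  clear hnd hne L
  intro len
  induction len with
  | zero =>
    intro L hL hnd hne
    exact absurd (length_eq_zero_iff.1 (Nat.le_zero.1 hL)) hne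
  | succ len ih =>
    intro L hL hnd hne
    obtain ⟨P, M, Q, rfl, hP, hQ⟩ := exists_max_split hne hnd
    have hlen : (P ++ M :: Q).length = P.length + Q.length + 1 := by
      simp only [length_append, length_cons]; omega
    have hPnd : P.Nodup := ((nodup_append.1 hnd).1)
    have hQnd : Q.Nodup := (nodup_cons.1 (nodup_append.1 hnd).2.1).2
    have hdisj : List.Disjoint P (M :: Q) := fun x hx hx' => (nodup_append.1 hnd).2.2 x hx x hx' rfl
    have hMP : M ∉ P := fun hm => hdisj hm List.mem_cons_self
    have hMQ : M ∉ Q := (nodup_cons.1 (nodup_append.1 hnd).2.1).1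
    set p := minimalPeriod Tl (P ++ M :: Q) with hp
    set π := minimalPeriod Tl P with hπ
    set κ := minimalPeriod Tl Q with hκ
    have hπpos : 0 < π := minimalPeriod_Tl_pos P hPnd
    have hκpos : 0 < κ := minimalPeriod_Tl_pos Q hQnd
    have hPfix : Tl^[π] P = P := Tl_iterate_minimalPeriod P hPnd
    have hQfix : Tl^[κ] Q = Q := Tl_iterate_minimalPeriod Q hQnd
    set l := Nat.lcm π κ with hl
    have hlpos : 0 < l := Nat.lcm_pos hπpos hκpos
    have hPl : Tl^[l] P = P := iterate_fixed_of_dvd hPfix (Nat.dvd_lcm_left _ _)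
    have hQl : Tl^[l] Q = Q := iterate_fixed_of_dvd hQfix (Nat.dvd_lcm_right _ _)
    -- Case: singleton
    by_cases hPQ : P = [] ∧ Q = []
    · obtain ⟨rfl, rfl⟩ := hPQ
      have hfix : Tl ([] ++ M :: []) = [] ++ M :: [] := by
        rw [Tl_split hP hQ, Tl_nil]
      have hp1 : p = 1 := by
        rw [hp]
        have : IsPeriodicPt Tl 1 ([] ++ M :: ([] : List α)) := by
          simpa [IsPeriodicPt, IsFixedPt] using hfix
        exact Nat.dvd_one.mp this.minimalPeriod_dvd
      rw [hp1]
      simp only [Finset.sum_range_one, Function.iterate_zero_apply]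
      rw [show ([] ++ M :: ([] : List α)) = ([] : List α) ++ M :: [] from rfl,
        Bl_split hP hQ, Bl_nil]
      simp
    -- Main case
    · have hkey : p = 2 * l := by
        have hdvd1 : p ∣ 2 * l := by
          apply IsPeriodicPt.minimalPeriod_dvd
          show Tl^[2 * l] (P ++ M :: Q) = P ++ M :: Q
          rw [Tl_iter_two_mul hP hQ, hPl, hQl]
        have hppos : 0 < p := minimalPeriod_Tl_pos _ hnd
        have hfixp : Tl^[p] (P ++ M :: Q) = P ++ M :: Q := Tl_iterate_minimalPeriod _ hnd
        have hdvd2 : 2 * l ∣ p := by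
          rcases Nat.even_or_odd p with ⟨k, hk⟩ | ⟨k, hk⟩
          · -- p = 2k
            rw [hk, show k + k = 2 * k by ring, Tl_iter_two_mul hP hQ] at hfixp
            obtain ⟨hPk, hQk⟩ := append_cons_inj_of_not_mem hfixp
              (fun hm => hMP ((Tl_iterate_perm k P).mem_iff.1 hm)) hMP
            have hπk : π ∣ k := IsPeriodicPt.minimalPeriod_dvd hPk
            have hκk : κ ∣ k := IsPeriodicPt.minimalPeriod_dvd hQk
            have hlk : l ∣ k := Nat.lcm_dvd hπk hκk
            rw [hk, show k + k = 2 * k from by ring]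
            exact mul_dvd_mul_left 2 hlk
          · -- p = 2k+1 : contradiction
            exfalso
            rw [hk, Tl_iter_odd hP hQ] at hfixp
            obtain ⟨hQP, hPQ'⟩ := append_cons_inj_of_not_mem hfixp
              (fun hm => hMQ ((Tl_iterate_perm (k+1) Q).mem_iff.1 hm)) hMP
            -- Tl^[k+1] Q = P and Tl^[k] P = Q, so P ~ Q, disjoint → both empty
            have hPermQP : Q ~ P := (Tl_iterate_perm (k+1) Q).symm.trans (hQP ▸ Perm.refl _)
            have hPe : P = [] := by
              by_contra hPe
              obtain ⟨x, hx⟩ := exists_mem_of_ne_nil P hPe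
              have hxQ : x ∈ Q := hPermQP.mem_iff.2 hx
              exact hdisj hx (mem_cons_of_mem _ hxQ)
            have hQe : Q = [] := by
              rw [hPe] at hPermQP
              exact hPermQP.eq_nil
            exact hPQ ⟨hPe, hQe⟩
        exact Nat.dvd_antisymm hdvd1 hdvd2
      -- now the sum
      rw [hkey, sum_even_odd (fun j => Bl (Tl^[j] (P ++ M :: Q))) l]
      have hterm : ∀ k, Bl (Tl^[2 * k] (P ++ M :: Q)) + Bl (Tl^[2 * k + 1] (P ++ M :: Q)) =
          (Bl (Tl^[k] P) + (if Q = [] then 1 else 0))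
          + (Bl (Tl^[k + 1] Q) + (if P = [] then 1 else 0)) := by
        intro k
        have hPk : ∀ x ∈ Tl^[k] P, x < M := fun x hx => hP x ((Tl_iterate_perm k P).mem_iff.1 hx)
        have hQk : ∀ x ∈ Tl^[k] Q, x < M := fun x hx => hQ x ((Tl_iterate_perm k Q).mem_iff.1 hx)
        have hQk1 : ∀ x ∈ Tl^[k+1] Q, x < M :=
          fun x hx => hQ x ((Tl_iterate_perm (k+1) Q).mem_iff.1 hx)
        rw [Tl_iter_two_mul hP hQ, Tl_iter_odd hP hQ, Bl_split hPk hQk, Bl_split hQk1 hPk]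
        congr 2
        · simp only [Tl_iterate_eq_nil_iff]
        · simp only [Tl_iterate_eq_nil_iff]
      simp only [hterm]
      rw [Finset.sum_add_distrib, Finset.sum_add_distrib, Finset.sum_add_distrib]
      have hsumP : ∑ k ∈ Finset.range l, Bl (Tl^[k] P) + ∑ _k ∈ Finset.range l, (if P = [] then 1 else 0) = l := by
        rcases eq_or_ne P [] with rfl | hPe
        · simp [Tl_iterate_nil, Bl_nil]
        · have hPsum : ∑ k ∈ Finset.range π, Bl (Tl^[k] P) = π := by
            apply ih P _ hPnd hPe
            rw [hlen] at hL; omega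
          have hldiv : (l / π) * π = l := Nat.div_mul_cancel (Nat.dvd_lcm_left _ _)
          rw [← hldiv, sum_iterate_period _ hPfix, hPsum]
          simp [hPe, hldiv]
      have hsumQ : ∑ k ∈ Finset.range l, Bl (Tl^[k + 1] Q) + ∑ _k ∈ Finset.range l, (if Q = [] then 1 else 0) = l := by
        rcases eq_or_ne Q [] with rfl | hQe
        · simp [Tl_iterate_nil, Bl_nil]
        · have hshift : ∑ k ∈ Finset.range l, Bl (Tl^[k + 1] Q) =
              ∑ k ∈ Finset.range l, Bl (Tl^[k] Q) := sum_iterate_shift _ hQl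
          have hQsum : ∑ k ∈ Finset.range κ, Bl (Tl^[k] Q) = κ := by
            apply ih Q _ hQnd hQe
            rw [hlen] at hL; omega
          have hldiv : (l / κ) * κ = l := Nat.div_mul_cancel (Nat.dvd_lcm_right _ _)
          rw [hshift, ← hldiv, sum_iterate_period _ hQfix, hQsum]
          simp [hQe, hldiv]
      omega

end ListPart4

section Blocks
open List
variable {α : Type*} [LinearOrder α]

/-- Flatten a list of blocks, each given as (leader, tail). -/
def flattenB (Bs : List (α × List α)) : List α := Bs.flatMap (fun p => p.1 :: p.2)

omit [LinearOrder α] in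
lemma flattenB_append (Bs Cs : List (α × List α)) :
    flattenB (Bs ++ Cs) = flattenB Bs ++ flattenB Cs := by
  simp [flattenB, flatMap_append]

lemma lt_of_mem_flattenB {Bs : List (α × List α)} {b : α}
    (hblk : ∀ p ∈ Bs, ∀ x ∈ p.2, x < p.1)
    (hhead : ∀ p ∈ Bs, p.1 < b) :
    ∀ x ∈ flattenB Bs, x < b := by
  intro x hx
  simp only [flattenB, mem_flatMap] at hx
  obtain ⟨q, hq, hxq⟩ := hx
  rcases mem_cons.1 hxq with rfl | hx2
  · exact hhead q hq
  · exact lt_trans (hblk q hq x hx2) (hhead q hq)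

lemma Bl_flattenB : ∀ (Bs : List (α × List α)),
    (∀ p ∈ Bs, ∀ x ∈ p.2, x < p.1) → (Bs.map Prod.fst).Pairwise (· < ·) →
    Bl (flattenB Bs) = Bs.countP (fun p => p.2 = []) := by
  intro Bs
  induction Bs using List.reverseRecOn with
  | nil => intro _ _; simp [flattenB, Bl_nil]
  | append_singleton Bs p ih =>
    intro hblk hpair
    have hblk' : ∀ q ∈ Bs, ∀ x ∈ q.2, x < q.1 := fun q hq => hblk q (mem_append_left _ hq)
    have hpair' : (Bs.map Prod.fst).Pairwise (· < ·) := by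
      rw [map_append] at hpair
      exact (pairwise_append.1 hpair).1
    have hlast : ∀ q ∈ Bs, q.1 < p.1 := by
      intro q hq
      rw [map_append] at hpair
      exact (pairwise_append.1 hpair).2.2 q.1 (mem_map_of_mem hq) p.1 (by simp)
    have hbound : ∀ x ∈ flattenB Bs, x < p.1 := lt_of_mem_flattenB hblk' hlast
    have hblkp : ∀ x ∈ p.2, x < p.1 := hblk p (mem_append_right _ (by simp))
    rw [flattenB_append, show flattenB [p] = p.1 :: p.2 from by simp [flattenB],
      Bl_split hbound hblkp, ih hblk' hpair', countP_append]
    by_cases h : p.2 = [] <;> simp [countP_cons, h]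
lemma Tl_reverse_flattenB : ∀ (Bs : List (α × List α)),
    (∀ p ∈ Bs, ∀ x ∈ p.2, x < p.1) → (Bs.map Prod.fst).Pairwise (· < ·) →
    Tl (flattenB Bs).reverse = flattenB (Bs.map (fun p => (p.1, p.2.reverse))) := by
  intro Bs
  induction Bs using List.reverseRecOn with
  | nil => intro _ _; simp [flattenB, Tl_nil]
  | append_singleton Bs p ih =>
    intro hblk hpair
    have hblk' : ∀ q ∈ Bs, ∀ x ∈ q.2, x < q.1 := fun q hq => hblk q (mem_append_left _ hq)
    have hpair' : (Bs.map Prod.fst).Pairwise (· < ·) := by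
      rw [map_append] at hpair
      exact (pairwise_append.1 hpair).1
    have hlast : ∀ q ∈ Bs, q.1 < p.1 := by
      intro q hq
      rw [map_append] at hpair
      exact (pairwise_append.1 hpair).2.2 q.1 (mem_map_of_mem hq) p.1 (by simp)
    have hbound : ∀ x ∈ flattenB Bs, x < p.1 := lt_of_mem_flattenB hblk' hlast
    have hboundrev : ∀ x ∈ (flattenB Bs).reverse, x < p.1 := fun x hx =>
      hbound x (mem_reverse.1 hx)
    have hblkp : ∀ x ∈ p.2.reverse, x < p.1 := fun x hx =>
      hblk p (mem_append_right _ (by simp)) x (mem_reverse.1 hx)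
    rw [flattenB_append, show flattenB [p] = p.1 :: p.2 from by simp [flattenB]]
    rw [reverse_append, reverse_cons]
    rw [show p.2.reverse ++ [p.1] ++ (flattenB Bs).reverse
        = p.2.reverse ++ p.1 :: (flattenB Bs).reverse from by simp]
    rw [Tl_split hblkp hboundrev, ih hblk' hpair']
    rw [map_append, flattenB_append]
    simp [flattenB]
end Blocks

section CycLemmas
open Function List Equiv

variable {n : ℕ}

lemma perm_mem_periodicPts (w : Equiv.Perm (Fin n)) (x : Fin n) :
    x ∈ periodicPts ⇑w := by
  refine ⟨orderOf w, orderOf_pos w, ?_⟩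
  show (⇑w)^[orderOf w] x = x
  rw [Equiv.Perm.iterate_eq_pow, pow_orderOf_eq_one]
  rfl

lemma mp_pos (w : Equiv.Perm (Fin n)) (x : Fin n) : 0 < minimalPeriod ⇑w x :=
  minimalPeriod_pos_iff_mem_periodicPts.2 (perm_mem_periodicPts w x)

lemma mp_iterate (w : Equiv.Perm (Fin n)) (x : Fin n) :
    (w ^ minimalPeriod ⇑w x) x = x := by
  rw [← Equiv.Perm.iterate_eq_pow]
  exact iterate_minimalPeriod

lemma mp_inj (w : Equiv.Perm (Fin n)) (x : Fin n) {i j : ℕ}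
    (hi : i < minimalPeriod ⇑w x) (hj : j < minimalPeriod ⇑w x)
    (h : (w ^ i) x = (w ^ j) x) : i = j := by
  have := iterate_injOn_Iio_minimalPeriod (f := ⇑w) (x := x)
  apply this hi hj
  simpa [Equiv.Perm.iterate_eq_pow] using h

lemma mp_le (w : Equiv.Perm (Fin n)) (x : Fin n) : minimalPeriod ⇑w x ≤ n := by
  set m := minimalPeriod ⇑w x with hm
  by_contra h
  push_neg at h
  -- the n+1 values w^0 x, ..., w^n x would be distinct, contradiction with card
  have hinj : ∀ a ∈ Finset.range m, ∀ b ∈ Finset.range m, (w ^ a) x = (w ^ b) x → a = b := by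
    intro a ha b hb hab
    exact mp_inj w x (Finset.mem_range.1 ha) (Finset.mem_range.1 hb) hab
  have hcard : (Finset.range m).card ≤ (Finset.univ : Finset (Fin n)).card := by
    rw [← Finset.card_image_of_injOn (f := fun k => (w ^ k) x)
      (fun a ha b hb => hinj a ha b hb)]
    exact Finset.card_le_univ _
  simp only [Finset.card_range, Finset.card_univ, Fintype.card_fin] at hcard
  omega

lemma mp_pow_mod (w : Equiv.Perm (Fin n)) (x : Fin n) (k : ℕ) :
    (w ^ (k % minimalPeriod ⇑w x)) x = (w ^ k) x := by
  rw [← Equiv.Perm.iterate_eq_pow, ← Equiv.Perm.iterate_eq_pow]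
  exact iterate_mod_minimalPeriod_eq

lemma cyc_eq (w : Equiv.Perm (Fin n)) (x : Fin n) :
    cyc w x = (List.range (minimalPeriod ⇑w x)).map (fun k => (w ^ k) x) := by
  set m := minimalPeriod ⇑w x with hm
  have hmn : m ≤ n := mp_le w x
  have hmain : ∀ t ≤ n, (List.range t).foldl
      (fun acc k => if (w ^ k) x ∈ acc then acc else acc ++ [(w ^ k) x]) []
      = (List.range (min t m)).map (fun k => (w ^ k) x) := by
    intro t
    induction t with
    | zero => intro _; simp
    | succ t ih =>
      intro ht
      rw [List.range_succ, List.foldl_append, ih (by omega)]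
      simp only [List.foldl_cons, List.foldl_nil]
      by_cases htm : t < m
      · have hmin : min t m = t := by omega
        have hmin1 : min (t + 1) m = t + 1 := by omega
        rw [hmin, hmin1]
        have hnotmem : (w ^ t) x ∉ (List.range t).map (fun k => (w ^ k) x) := by
          intro hmem
          obtain ⟨j, hj, hjeq⟩ := List.mem_map.1 hmem
          have hjt := List.mem_range.1 hj
          have := mp_inj w x htm (by omega) hjeq.symm
          omega
        rw [if_neg hnotmem, List.range_succ, List.map_append]
        simp
      · have hmin : min t m = m := by omega
        have hmin1 : min (t + 1) m = m := by omega
        rw [hmin, hmin1]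
        have hmem : (w ^ t) x ∈ (List.range m).map (fun k => (w ^ k) x) := by
          apply List.mem_map.2
          refine ⟨t % m, List.mem_range.2 (Nat.mod_lt _ (mp_pos w x)), mp_pow_mod w x t⟩
        rw [if_pos hmem]
  have := hmain n le_rfl
  rw [cyc, this, min_eq_right hmn]

lemma cyc_nodup (w : Equiv.Perm (Fin n)) (x : Fin n) : (cyc w x).Nodup := by
  rw [cyc_eq]
  apply List.Nodup.map_on
  · intro a ha b hb hab
    exact mp_inj w x (List.mem_range.1 ha) (List.mem_range.1 hb) hab
  · exact List.nodup_range

lemma cyc_cons (w : Equiv.Perm (Fin n)) (x : Fin n) : cyc w x = x :: (cyc w x).tail := by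
  rw [cyc_eq]
  obtain ⟨m', hm'⟩ : ∃ m', minimalPeriod ⇑w x = m' + 1 :=
    ⟨minimalPeriod ⇑w x - 1, by have := mp_pos w x; omega⟩
  rw [hm', List.range_succ_eq_map]
  simp

lemma mem_cyc_iff_exists_pow (w : Equiv.Perm (Fin n)) (x y : Fin n) :
    y ∈ cyc w x ↔ ∃ k : ℕ, (w ^ k) x = y := by
  rw [cyc_eq]
  constructor
  · intro h
    obtain ⟨k, _, hk⟩ := List.mem_map.1 h
    exact ⟨k, hk⟩
  · rintro ⟨k, rfl⟩
    exact List.mem_map.2 ⟨k % minimalPeriod ⇑w x,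
      List.mem_range.2 (Nat.mod_lt _ (mp_pos w x)), mp_pow_mod w x k⟩

lemma mem_cyc_iff_sameCycle (w : Equiv.Perm (Fin n)) (x y : Fin n) :
    y ∈ cyc w x ↔ w.SameCycle x y := by
  rw [mem_cyc_iff_exists_pow]
  constructor
  · rintro ⟨k, hk⟩
    exact ⟨(k : ℤ), by simpa using hk⟩
  · intro h
    obtain ⟨i, _, _, hi⟩ := h.exists_pow_eq w
    exact ⟨i, hi⟩

lemma mem_cyc_self (w : Equiv.Perm (Fin n)) (x : Fin n) : x ∈ cyc w x :=
  (mem_cyc_iff_exists_pow w x x).2 ⟨0, rfl⟩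

lemma cyc_mem_congr (w : Equiv.Perm (Fin n)) {x y z : Fin n} (hy : y ∈ cyc w x) :
    z ∈ cyc w y ↔ z ∈ cyc w x := by
  rw [mem_cyc_iff_sameCycle, mem_cyc_iff_sameCycle]
  have hxy : w.SameCycle x y := (mem_cyc_iff_sameCycle w x y).1 hy
  exact ⟨fun h => hxy.trans h, fun h => hxy.symm.trans h⟩

end CycLemmas

section FoataLemmas
open Function List Equiv

variable {n : ℕ}

/-- The list of cycle leaders. -/
def leaders (w : Equiv.Perm (Fin n)) : List (Fin n) :=
  (List.finRange n).filter (fun x => decide (∀ y ∈ cyc w x, y ≤ x))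

/-- The blocks of the Foata word: (leader, rest of cycle). -/
def blocksOf (w : Equiv.Perm (Fin n)) : List (Fin n × List (Fin n)) :=
  (leaders w).map (fun x => (x, (cyc w x).tail))

lemma mem_leaders_iff {w : Equiv.Perm (Fin n)} {x : Fin n} :
    x ∈ leaders w ↔ ∀ y ∈ cyc w x, y ≤ x := by
  simp [leaders, List.mem_filter, List.mem_finRange]

lemma foataWord_eq (w : Equiv.Perm (Fin n)) : foataWord w = flattenB (blocksOf w) := by
  rw [foataWord, flattenB, blocksOf, List.flatMap_map]
  exact List.flatMap_congr (fun x _ => cyc_cons w x)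

lemma blocksOf_blk (w : Equiv.Perm (Fin n)) :
    ∀ p ∈ blocksOf w, ∀ y ∈ p.2, y < p.1 := by
  intro p hp y hy
  obtain ⟨x, hx, rfl⟩ := List.mem_map.1 hp
  have hleader : ∀ z ∈ cyc w x, z ≤ x := mem_leaders_iff.1 hx
  have hycyc : y ∈ cyc w x := by
    rw [cyc_cons w x]
    exact mem_cons_of_mem _ hy
  refine lt_of_le_of_ne (hleader y hycyc) ?_
  intro hyx
  have hnd := cyc_nodup w x
  rw [cyc_cons w x] at hnd
  apply (nodup_cons.1 hnd).1
  have hyx' : y = x := hyx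
  have hy' : y ∈ (cyc w x).tail := hy
  rw [hyx'] at hy'
  exact hy' 

lemma blocksOf_fst (w : Equiv.Perm (Fin n)) :
    (blocksOf w).map Prod.fst = leaders w := by
  simp [blocksOf, List.map_map, Function.comp_def]

lemma leaders_pairwise (w : Equiv.Perm (Fin n)) :
    (leaders w).Pairwise (· < ·) :=
  List.Pairwise.sublist List.filter_sublist (List.pairwise_lt_finRange n)

lemma blocksOf_fst_pairwise (w : Equiv.Perm (Fin n)) :
    ((blocksOf w).map Prod.fst).Pairwise (· < ·) := by
  rw [blocksOf_fst]; exact leaders_pairwise w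

lemma leader_and_tail_nil_iff {w : Equiv.Perm (Fin n)} {x : Fin n} :
    ((∀ y ∈ cyc w x, y ≤ x) ∧ (cyc w x).tail = []) ↔ w x = x := by
  constructor
  · rintro ⟨_, htail⟩
    have hcyc : cyc w x = [x] := by rw [cyc_cons w x, htail]
    have hlen : (cyc w x).length = minimalPeriod ⇑w x := by
      rw [cyc_eq]; simp
    rw [hcyc] at hlen
    simp at hlen
    have := mp_iterate w x
    rw [← hlen] at this
    simpa using this
  · intro hfix
    have hm : minimalPeriod ⇑w x = 1 := by
      have h1 : IsPeriodicPt ⇑w 1 x := by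
        show (⇑w)^[1] x = x
        simpa using hfix
      exact Nat.dvd_one.mp h1.minimalPeriod_dvd
    have hcyc : cyc w x = [x] := by
      rw [cyc_eq, hm, List.range_succ]
      simp
    rw [hcyc]
    exact ⟨fun y hy => le_of_eq (by simpa using hy), rfl⟩

lemma fixCount_eq_countP_s10 (w : Equiv.Perm (Fin n)) :
    fixCount w = (blocksOf w).countP (fun p => p.2 = []) := by
  have h1 : (blocksOf w).countP (fun p => p.2 = []) =
      (List.finRange n).countP (fun x => decide (w x = x)) := by
    rw [blocksOf, List.countP_map, leaders, List.countP_filter]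
    apply List.countP_congr
    intro x _
    show ((decide ((cyc w x).tail = []) && decide (∀ y ∈ cyc w x, y ≤ x)) = true)
      ↔ (decide (w x = x) = true)
    rw [Bool.and_eq_true, decide_eq_true_eq, decide_eq_true_eq, decide_eq_true_eq]
    constructor
    · rintro ⟨h2, h3⟩
      exact leader_and_tail_nil_iff.1 ⟨h3, h2⟩
    · intro h
      obtain ⟨h3, h2⟩ := leader_and_tail_nil_iff.2 h
      exact ⟨h2, h3⟩
  rw [h1, fixCount, List.countP_eq_length_filter]
  have h2 := List.toFinset_card_of_nodup
    ((List.nodup_finRange n).filter (fun x => decide (w x = x)))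
  rw [List.toFinset_filter, List.toFinset_finRange] at h2
  rw [← h2]
  congr 1
  apply Finset.filter_congr
  intro x _
  simp

lemma fixCount_eq_Bl (w : Equiv.Perm (Fin n)) : fixCount w = Bl (foataWord w) := by
  rw [foataWord_eq, Bl_flattenB _ (blocksOf_blk w) (blocksOf_fst_pairwise w)]
  rw [fixCount_eq_countP_s10 w]

lemma mp_inv (w : Equiv.Perm (Fin n)) (x : Fin n) :
    minimalPeriod ⇑(w⁻¹) x = minimalPeriod ⇑w x := by
  have key : ∀ (u : Equiv.Perm (Fin n)) (k : ℕ), ((u⁻¹) ^ k) x = x ↔ (u ^ k) x = x := by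
    intro u k
    rw [inv_pow]
    rw [Equiv.Perm.inv_eq_iff_eq]
    exact ⟨fun h => h.symm, fun h => h.symm⟩
  have h1 : IsPeriodicPt ⇑(w⁻¹) (minimalPeriod ⇑w x) x := by
    show (⇑(w⁻¹))^[_] x = x
    rw [Equiv.Perm.iterate_eq_pow, key]
    exact mp_iterate w x
  have h2 : IsPeriodicPt ⇑w (minimalPeriod ⇑(w⁻¹) x) x := by
    show (⇑w)^[_] x = x
    rw [Equiv.Perm.iterate_eq_pow]
    rw [← key w (minimalPeriod ⇑(w⁻¹) x)]
    exact mp_iterate w⁻¹ x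
  exact Nat.dvd_antisymm h1.minimalPeriod_dvd h2.minimalPeriod_dvd

lemma cyc_inv (w : Equiv.Perm (Fin n)) (x : Fin n) :
    cyc w⁻¹ x = x :: (cyc w x).tail.reverse := by
  obtain ⟨m', hm'⟩ : ∃ m', minimalPeriod ⇑w x = m' + 1 :=
    ⟨minimalPeriod ⇑w x - 1, by have := mp_pos w x; omega⟩
  rw [cyc_eq, cyc_eq, mp_inv, hm', List.range_succ_eq_map]
  simp only [List.map_cons, pow_zero, Equiv.Perm.coe_one, id_eq, List.map_map, List.tail_cons]
  congr 1
  apply List.ext_getElem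
  · simp
  · intro i h1 h2
    simp only [List.length_map, List.length_range] at h1 h2
    rw [List.getElem_reverse]
    simp only [List.getElem_map, List.getElem_range, Function.comp_apply,
      Nat.succ_eq_add_one, List.length_map, List.length_range]
    have hinj : Function.Injective ⇑(w ^ (i + 1)) := (w ^ (i + 1)).injective
    apply hinj
    have hL : (w ^ (i + 1)) ((w⁻¹ ^ (i + 1)) x) = x := by
      rw [inv_pow]
      exact Equiv.apply_symm_apply (w ^ (i + 1)) x
    have hR : (w ^ (i + 1)) ((w ^ (m' - 1 - i + 1)) x) = x := by
      rw [← Equiv.Perm.mul_apply, ← pow_add,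
        show i + 1 + (m' - 1 - i + 1) = m' + 1 from by omega, ← hm']
      exact mp_iterate w x
    rw [hL, hR]

lemma mem_cyc_inv (w : Equiv.Perm (Fin n)) (x y : Fin n) :
    y ∈ cyc w⁻¹ x ↔ y ∈ cyc w x := by
  conv_rhs => rw [cyc_cons w x]
  rw [cyc_inv]
  simp [List.mem_reverse]

lemma leaders_inv (w : Equiv.Perm (Fin n)) : leaders w⁻¹ = leaders w := by
  apply List.filter_congr
  intro x _
  rw [decide_eq_decide]
  constructor
  · intro h y hy
    exact h y ((mem_cyc_inv w x y).2 hy)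
  · intro h y hy
    exact h y ((mem_cyc_inv w x y).1 hy)

lemma blocksOf_inv (w : Equiv.Perm (Fin n)) :
    blocksOf w⁻¹ = (blocksOf w).map (fun p => (p.1, p.2.reverse)) := by
  rw [blocksOf, blocksOf, leaders_inv, List.map_map]
  apply List.map_congr_left
  intro x _
  simp only [Function.comp_apply]
  rw [cyc_inv]
  simp

lemma foataWord_inv (w : Equiv.Perm (Fin n)) :
    foataWord w⁻¹ = Tl ((foataWord w).reverse) := by
  rw [foataWord_eq, foataWord_eq,
    Tl_reverse_flattenB _ (blocksOf_blk w) (blocksOf_fst_pairwise w), blocksOf_inv]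

lemma foataWord_nodup (w : Equiv.Perm (Fin n)) : (foataWord w).Nodup := by
  rw [foataWord]
  apply List.nodup_flatMap.2
  refine ⟨fun x _ => cyc_nodup w x, ?_⟩
  have hpl : (leaders w).Pairwise (· < ·) := leaders_pairwise w
  apply hpl.imp_of_mem
  intro x y hx hy hxy
  intro z hzx hzy
  exfalso
  have hxz : w.SameCycle x z := (mem_cyc_iff_sameCycle w x z).1 hzx
  have hyz : w.SameCycle y z := (mem_cyc_iff_sameCycle w y z).1 hzy
  have hxy' : w.SameCycle x y := hxz.trans hyz.symm
  have hyx : y ∈ cyc w x := (mem_cyc_iff_sameCycle w x y).2 hxy'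
  have hxy'' : x ∈ cyc w y := (mem_cyc_iff_sameCycle w y x).2 hxy'.symm
  have h1 : y ≤ x := (mem_leaders_iff.1 hx) y hyx
  exact absurd hxy (not_lt.2 h1)

lemma foataWord_ne_nil (hn : 1 ≤ n) (w : Equiv.Perm (Fin n)) : foataWord w ≠ [] := by
  set x0 : Fin n := ⟨0, hn⟩
  have hcyc := cyc_cons w x0
  set t := (cyc w x0).tail with ht
  set z := t.foldl max x0 with hz
  have hzmem : z ∈ cyc w x0 := by rw [hcyc]; exact foldl_max_mem t x0
  have hub : ∀ y ∈ cyc w x0, y ≤ z := by rw [hcyc]; exact le_foldl_max t x0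
  have hleader : z ∈ leaders w := by
    rw [mem_leaders_iff]
    intro y hy
    exact hub y ((cyc_mem_congr w hzmem).1 hy)
  have hmem : z ∈ foataWord w := by
    rw [foataWord]
    exact List.mem_flatMap.2 ⟨z, hleader, mem_cyc_self w z⟩
  exact List.ne_nil_of_mem hmem

end FoataLemmas


/-- The statistic `Fix` (number of fixed points) is 1-mesic
for the action of `φ̄ = I ∘ F⁻¹ ∘ R ∘ F` on `S_n`: the average of `Fix` over
every `φ̄`-orbit equals `1`. -/
theorem fix_one_mesic_phiBar (n : ℕ) (hn : 1 ≤ n)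
    (φ : Equiv.Perm (Fin n) → Equiv.Perm (Fin n))
    (hφ : ∀ w, IsPhiBar w (φ w)) (w : Equiv.Perm (Fin n)) :
    ∑ k ∈ Finset.range (Function.minimalPeriod φ w),
        (fixCount (φ^[k] w) : ℚ) =
      (Function.minimalPeriod φ w : ℚ) := by
  classical
  set W := foataWord w with hW
  have hmaster : ∀ u, foataWord (φ u) = Tl (foataWord u) := by
    intro u
    have h : foataWord (φ u)⁻¹ = (foataWord u).reverse := hφ u
    have h2 := foataWord_inv ((φ u)⁻¹)
    rw [inv_inv] at h2
    rw [h2, h, List.reverse_reverse]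
  have hWk : ∀ k, foataWord (φ^[k] w) = Tl^[k] W := by
    intro k
    induction k with
    | zero => simp [hW]
    | succ k ih =>
      rw [Function.iterate_succ_apply', Function.iterate_succ_apply', hmaster, ih]
  set p := Function.minimalPeriod φ w with hp
  rcases Nat.eq_zero_or_pos p with hp0 | hppos
  · rw [hp0]; simp
  have hWnd : W.Nodup := foataWord_nodup w
  have hWne : W ≠ [] := foataWord_ne_nil hn w
  have hfixp : φ^[p] w = w := Function.iterate_minimalPeriod
  have hTp : Tl^[p] W = W := by rw [← hWk p, hfixp]
  set q := Function.minimalPeriod Tl W with hq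
  have hqdvd : q ∣ p := Function.IsPeriodicPt.minimalPeriod_dvd hTp
  have hTq : Tl^[q] W = W := Tl_iterate_minimalPeriod W hWnd
  have hsum : ∑ k ∈ Finset.range p, fixCount (φ^[k] w) = p := by
    have h1 : ∀ k, fixCount (φ^[k] w) = Bl (Tl^[k] W) := by
      intro k; rw [fixCount_eq_Bl, hWk]
    simp only [h1]
    have hdm : (p / q) * q = p := Nat.div_mul_cancel hqdvd
    rw [← hdm, sum_iterate_period _ hTq, Bl_orbit_sum W hWnd hWne]
  calc ∑ k ∈ Finset.range p, (fixCount (φ^[k] w) : ℚ)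
      = ((∑ k ∈ Finset.range p, fixCount (φ^[k] w) : ℕ) : ℚ) := by push_cast; rfl
    _ = (p : ℚ) := by rw [hsum]
end
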